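/- Let μ > 0, M ∈ ℝ, and let A_M be the diffusion wave. Let E(ξ) = exp((1/(2μ)) ∫_{−∞}^ξ A_M(y) dy). Let V : ℝ → ℝ be twice continuously differentiable and integrable, with V'(y) → 0 and y V(y) → 0 as y → −∞. Define (U V)(ξ) = d/dξ [ E(ξ) ∫_{−∞}^ξ V(y) dy ]. Then for all ξ ∈ ℝ, μ (U V)''(ξ) + (1/2) d/dξ(ξ (U V)(ξ)) − d/dξ(A_M(ξ) (U V)(ξ)) = d/dξ [ E(ξ) ( μ V'(ξ) + (1/2) ξ V(ξ) ) ]; that is, the linearization A_μ^M of the rescaled Burgers equation about A_M and the operator L_μ satisfy the conjugacy A_μ^M ∘ U = U ∘ L_μ. -/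

import Mathlib

open MeasureTheory

/-- The diffusion wave `A_M` with viscosity `μ` and mass `M`:
`A_M(ξ) = α₀ e^{−ξ²/(4μ)} / (1 − (α₀/(2μ)) ∫_{−∞}^ξ e^{−η²/(4μ)} dη)` with
`α₀ = √(μ/π)(1 − e^{−M/(2μ)})`. -/
noncomputable def AM (μ M ξ : ℝ) : ℝ :=
  Real.sqrt (μ / Real.pi) * (1 - Real.exp (-M / (2 * μ))) * Real.exp (-ξ ^ 2 / (4 * μ)) /
    (1 - Real.sqrt (μ / Real.pi) * (1 - Real.exp (-M / (2 * μ))) / (2 * μ) *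
      ∫ η in Set.Iio ξ, Real.exp (-η ^ 2 / (4 * μ)))

/-- `E(ξ) = exp((1/(2μ)) ∫_{−∞}^ξ A_M(y) dy)`. -/
noncomputable def Efun (μ M ξ : ℝ) : ℝ :=
  Real.exp (1 / (2 * μ) * ∫ y in Set.Iio ξ, AM μ M y)

/-- The conjugacy operator `U`: `(U V)(ξ) = d/dξ [ E(ξ) ∫_{−∞}^ξ V(y) dy ]`. -/
noncomputable def UV (μ M : ℝ) (V : ℝ → ℝ) (ξ : ℝ) : ℝ :=
  deriv (fun x => Efun μ M x * ∫ y in Set.Iio x, V y) ξ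

namespace Stmt7Aux

open Real Set Filter

noncomputable def gg (μ ξ : ℝ) : ℝ := Real.exp (-ξ ^ 2 / (4 * μ))

noncomputable def cc (μ M : ℝ) : ℝ :=
  Real.sqrt (μ / Real.pi) * (1 - Real.exp (-M / (2 * μ))) / (2 * μ)

noncomputable def DD (μ M ξ : ℝ) : ℝ := 1 - cc μ M * ∫ η in Set.Iio ξ, gg μ η

lemma gg_eq (μ : ℝ) : gg μ = fun x => Real.exp (-(1 / (4 * μ)) * x ^ 2) := by
  funext x; unfold gg; congr 1; ring

lemma gg_int {μ : ℝ} (hμ : 0 < μ) : Integrable (gg μ) := by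
  rw [gg_eq]; exact integrable_exp_neg_mul_sq (by positivity)

lemma gg_cont (μ : ℝ) : Continuous (gg μ) := by
  unfold gg; fun_prop

lemma gg_hasDeriv {μ : ℝ} (hμ : 0 < μ) (x : ℝ) :
    HasDerivAt (gg μ) (-(x / (2 * μ)) * gg μ x) x := by
  have h : HasDerivAt (fun x : ℝ => -x ^ 2 / (4 * μ)) (-(x / (2 * μ))) x := by
    have h0 := ((hasDerivAt_pow 2 x).neg).div_const (4 * μ)
    refine h0.congr_deriv ?_
    field_simp
    ring
  unfold gg
  convert h.exp using 1
  ring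

lemma hasDerivAt_integral_Iio {f : ℝ → ℝ} (hfi : Integrable f) (hfc : Continuous f) (ξ : ℝ) :
    HasDerivAt (fun x => ∫ y in Set.Iio x, f y) (f ξ) ξ := by
  have key : (fun x => ∫ y in Set.Iio x, f y)
      = fun x => (∫ y in Set.Iic (0 : ℝ), f y) + ∫ y in (0 : ℝ)..x, f y := by
    funext x
    rw [← integral_Iic_eq_integral_Iio,
      ← intervalIntegral.integral_Iic_sub_Iic hfi.integrableOn hfi.integrableOn]
    ring
  rw [key]
  exact (intervalIntegral.integral_hasDerivAt_right hfi.intervalIntegrable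
    (hfc.stronglyMeasurable.stronglyMeasurableAtFilter) hfc.continuousAt).const_add _

lemma tendsto_integral_Iio_atBot {f : ℝ → ℝ} (hfi : Integrable f) :
    Tendsto (fun x => ∫ y in Set.Iio x, f y) atBot (nhds 0) := by
  have h := intervalIntegral_tendsto_integral_Iic (0 : ℝ) hfi.integrableOn tendsto_id
  have h2 : Tendsto (fun x => (∫ y in Set.Iic (0 : ℝ), f y) - ∫ y in x..(0 : ℝ), f y) atBot
      (nhds ((∫ y in Set.Iic (0 : ℝ), f y) - ∫ y in Set.Iic (0 : ℝ), f y)) :=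
    tendsto_const_nhds.sub h
  rw [sub_self] at h2
  refine h2.congr fun x => ?_
  rw [← intervalIntegral.integral_Iic_sub_Iic hfi.integrableOn hfi.integrableOn,
    ← integral_Iic_eq_integral_Iio]
  ring

lemma gg_total {μ : ℝ} (hμ : 0 < μ) : (∫ η, gg μ η) = Real.sqrt (4 * Real.pi * μ) := by
  rw [gg_eq, integral_gaussian]
  congr 1
  field_simp

lemma cc_total {μ M : ℝ} (hμ : 0 < μ) :
    cc μ M * ∫ η, gg μ η = 1 - Real.exp (-M / (2 * μ)) := by
  rw [gg_total hμ]
  unfold cc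
  have h1 : Real.sqrt (μ / Real.pi) * Real.sqrt (4 * Real.pi * μ) = 2 * μ := by
    rw [← Real.sqrt_mul (by positivity)]
    have h2 : μ / Real.pi * (4 * Real.pi * μ) = (2 * μ) ^ 2 := by
      field_simp [Real.pi_ne_zero]
      ring
    rw [h2, Real.sqrt_sq (by positivity)]
  have h2 : Real.sqrt (μ / Real.pi) * (1 - Real.exp (-M / (2 * μ))) / (2 * μ)
      * Real.sqrt (4 * Real.pi * μ)
      = 2 * μ * (1 - Real.exp (-M / (2 * μ))) / (2 * μ) := by
    rw [← h1]; ring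
  rw [h2]
  exact mul_div_cancel_left₀ _ (ne_of_gt (by positivity))

lemma DD_lb {μ : ℝ} (hμ : 0 < μ) (M x : ℝ) :
    min (Real.exp (-M / (2 * μ))) 1 ≤ DD μ M x := by
  have hInn : 0 ≤ ∫ η in Set.Iio x, gg μ η :=
    setIntegral_nonneg measurableSet_Iio fun y _ => (Real.exp_pos _).le
  have hIle : (∫ η in Set.Iio x, gg μ η) ≤ ∫ η, gg μ η :=
    setIntegral_le_integral (gg_int hμ) (Filter.Eventually.of_forall fun y => (Real.exp_pos _).le)
  unfold DD
  rcases le_or_gt (cc μ M) 0 with hc | hc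
  · have h3 : cc μ M * ∫ η in Set.Iio x, gg μ η ≤ 0 := mul_nonpos_of_nonpos_of_nonneg hc hInn
    calc min (Real.exp (-M / (2 * μ))) 1 ≤ 1 := min_le_right _ _
      _ ≤ 1 - cc μ M * ∫ η in Set.Iio x, gg μ η := by linarith
  · have h2 : cc μ M * ∫ η in Set.Iio x, gg μ η ≤ cc μ M * ∫ η, gg μ η :=
      mul_le_mul_of_nonneg_left hIle hc.le
    rw [cc_total hμ] at h2
    calc min (Real.exp (-M / (2 * μ))) 1 ≤ Real.exp (-M / (2 * μ)) := min_le_left _ _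
      _ ≤ 1 - cc μ M * ∫ η in Set.Iio x, gg μ η := by linarith

lemma DD_pos {μ : ℝ} (hμ : 0 < μ) (M x : ℝ) : 0 < DD μ M x :=
  lt_of_lt_of_le (lt_min (Real.exp_pos _) one_pos) (DD_lb hμ M x)

lemma DD_hasDeriv {μ : ℝ} (hμ : 0 < μ) (M x : ℝ) :
    HasDerivAt (DD μ M) (-(cc μ M * gg μ x)) x := by
  unfold DD
  simpa using (((hasDerivAt_integral_Iio (gg_int hμ) (gg_cont μ) x).const_mul
    (cc μ M)).const_sub 1)

lemma DD_cont {μ : ℝ} (hμ : 0 < μ) (M : ℝ) : Continuous (DD μ M) :=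
  continuous_iff_continuousAt.2 fun x => (DD_hasDeriv hμ M x).continuousAt

lemma DD_tendsto {μ : ℝ} (hμ : 0 < μ) (M : ℝ) :
    Tendsto (DD μ M) atBot (nhds 1) := by
  have h := (tendsto_integral_Iio_atBot (gg_int hμ)).const_mul (cc μ M)
  have h2 := (tendsto_const_nhds (α := ℝ) (f := atBot) (x := (1 : ℝ))).sub h
  exact (by simpa using h2 : Tendsto (fun x => 1 - cc μ M * ∫ y in Set.Iio x, gg μ y) atBot (nhds 1))

lemma AM_eq {μ : ℝ} (hμ : 0 < μ) (M x : ℝ) :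
    AM μ M x = 2 * μ * cc μ M * gg μ x / DD μ M x := by
  unfold AM cc gg DD
  congr 1
  field_simp

lemma AM_cont {μ : ℝ} (hμ : 0 < μ) (M : ℝ) : Continuous (AM μ M) := by
  have h : AM μ M = fun x => 2 * μ * cc μ M * gg μ x / DD μ M x := funext (AM_eq hμ M)
  rw [h]
  exact (continuous_const.mul (gg_cont μ)).div (DD_cont hμ M) fun x => (DD_pos hμ M x).ne'

lemma AM_int {μ : ℝ} (hμ : 0 < μ) (M : ℝ) : Integrable (AM μ M) := by
  set δ := min (Real.exp (-M / (2 * μ))) 1 with hδ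
  have hδpos : 0 < δ := lt_min (Real.exp_pos _) one_pos
  refine ((gg_int hμ).const_mul (2 * μ * |cc μ M| / δ)).mono'
    (AM_cont hμ M).aestronglyMeasurable (Filter.Eventually.of_forall fun x => ?_)
  rw [Real.norm_eq_abs, AM_eq hμ M x]
  have hDpos := DD_pos hμ M x
  have hDlb := DD_lb hμ M x
  have hgpos : 0 < gg μ x := Real.exp_pos _
  rw [abs_div, abs_of_pos hDpos]
  have hnum : |2 * μ * cc μ M * gg μ x| = 2 * μ * |cc μ M| * gg μ x := by
    rw [abs_mul, abs_mul, abs_of_pos hgpos, abs_of_pos (show (0:ℝ) < 2 * μ by linarith)]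
  rw [hnum]
  rw [div_le_iff₀ hDpos]
  have key : 2 * μ * |cc μ M| * gg μ x / δ * δ ≤ 2 * μ * |cc μ M| * gg μ x / δ * DD μ M x := by
    apply mul_le_mul_of_nonneg_left hDlb
    positivity
  calc 2 * μ * |cc μ M| * gg μ x = 2 * μ * |cc μ M| * gg μ x / δ * δ := by
        field_simp
    _ ≤ 2 * μ * |cc μ M| * gg μ x / δ * DD μ M x := key
    _ = 2 * μ * |cc μ M| / δ * gg μ x * DD μ M x := by ring

lemma integral_AM {μ : ℝ} (hμ : 0 < μ) (M ξ : ℝ) :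
    ∫ y in Set.Iio ξ, AM μ M y = -(2 * μ) * Real.log (DD μ M ξ) := by
  have hderiv : ∀ x ∈ Set.Iic ξ,
      HasDerivAt (fun y => -(2 * μ) * Real.log (DD μ M y)) (AM μ M x) x := by
    intro x _
    have h := ((DD_hasDeriv hμ M x).log (DD_pos hμ M x).ne').const_mul (-(2 * μ))
    refine h.congr_deriv ?_
    rw [AM_eq hμ M x]
    field_simp
  have htend : Tendsto (fun y => -(2 * μ) * Real.log (DD μ M y)) atBot (nhds 0) := by
    have h := ((DD_tendsto hμ M).log one_ne_zero).const_mul (-(2 * μ))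
    simpa using h
  have h := integral_Iic_of_hasDerivAt_of_tendsto' hderiv (AM_int hμ M).integrableOn htend
  rw [← integral_Iic_eq_integral_Iio, h, sub_zero]

lemma Efun_eq {μ : ℝ} (hμ : 0 < μ) (M x : ℝ) : Efun μ M x = (DD μ M x)⁻¹ := by
  unfold Efun
  rw [integral_AM hμ M x,
    show 1 / (2 * μ) * (-(2 * μ) * Real.log (DD μ M x)) = -Real.log (DD μ M x) by
      field_simp,
    Real.exp_neg, Real.exp_log (DD_pos hμ M x)]

noncomputable def WW (V : ℝ → ℝ) (x : ℝ) : ℝ := ∫ y in Set.Iio x, V y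

noncomputable def PP (μ M : ℝ) (V : ℝ → ℝ) (x : ℝ) : ℝ :=
  cc μ M * gg μ x * WW V x / DD μ M x ^ 2 + V x / DD μ M x

noncomputable def QQ (μ M : ℝ) (V : ℝ → ℝ) (x : ℝ) : ℝ :=
  (cc μ M * gg μ x * (V x - x / (2 * μ) * WW V x) * DD μ M x
      + 2 * cc μ M ^ 2 * gg μ x ^ 2 * WW V x) / DD μ M x ^ 3
    + (deriv V x * DD μ M x + cc μ M * gg μ x * V x) / DD μ M x ^ 2

lemma WW_hasDeriv {V : ℝ → ℝ} (hVi : Integrable V) (hVc : Continuous V) (x : ℝ) :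
    HasDerivAt (WW V) (V x) x :=
  hasDerivAt_integral_Iio hVi hVc x

lemma UV_eq {μ : ℝ} (hμ : 0 < μ) (M : ℝ) {V : ℝ → ℝ} (hVi : Integrable V)
    (hVc : Continuous V) (x : ℝ) : UV μ M V x = PP μ M V x := by
  unfold UV
  have hfun : (fun t => Efun μ M t * ∫ y in Set.Iio t, V y)
      = fun t => (DD μ M t)⁻¹ * WW V t := by
    funext t; rw [Efun_eq hμ M t]; rfl
  rw [hfun]
  have h : HasDerivAt (fun t => (DD μ M t)⁻¹ * WW V t)
      (-(-(cc μ M * gg μ x)) / DD μ M x ^ 2 * WW V x + (DD μ M x)⁻¹ * V x) x :=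
    ((DD_hasDeriv hμ M x).inv (DD_pos hμ M x).ne').mul (WW_hasDeriv hVi hVc x)
  rw [h.deriv]
  unfold PP
  have hDne := (DD_pos hμ M x).ne'
  field_simp

lemma PP_hasDeriv {μ M : ℝ} (hμ : 0 < μ) {V : ℝ → ℝ} (hVi : Integrable V)
    (hVc : Continuous V) (x : ℝ) (hVd : HasDerivAt V (deriv V x) x) :
    HasDerivAt (PP μ M V) (QQ μ M V x) x := by
  have hD := DD_hasDeriv hμ M x
  have hDne := (DD_pos hμ M x).ne'
  have hg := gg_hasDeriv hμ x
  have hW := WW_hasDeriv hVi hVc x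
  have h1 := ((hg.const_mul (cc μ M)).mul hW).div (hD.pow 2) (pow_ne_zero 2 hDne)
  have h2 := hVd.div hD hDne
  have h := h1.add h2
  refine h.congr_deriv ?_
  unfold QQ
  simp only [Pi.mul_apply, Pi.pow_apply, Nat.cast_ofNat, Nat.reduceSub, pow_one]
  have hμne : (μ : ℝ) ≠ 0 := hμ.ne'
  field_simp
  ring

lemma key_identity {μ M : ℝ} (hμ : 0 < μ) (V : ℝ → ℝ) (x : ℝ) :
    μ * QQ μ M V x + 1 / 2 * (x * PP μ M V x) - AM μ M x * PP μ M V x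
      = Efun μ M x * (μ * deriv V x + 1 / 2 * x * V x) := by
  rw [AM_eq hμ M x, Efun_eq hμ M x]
  unfold QQ PP
  have hDne := (DD_pos hμ M x).ne'
  have hμne : (μ : ℝ) ≠ 0 := hμ.ne'
  field_simp
  ring

end Stmt7Aux

open Stmt7Aux in
/-- for twice continuously differentiable integrable `V` with `V'(y) → 0`
and `y V(y) → 0` as `y → −∞`, the conjugacy `A_μ^M ∘ U = U ∘ L_μ` holds pointwise:
`μ (U V)'' + (1/2)(ξ (U V))' − (A_M (U V))' = d/dξ [ E (μ V' + (1/2) ξ V) ]`. -/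
theorem stmt7 (μ M : ℝ) (hμ : 0 < μ) (V : ℝ → ℝ)
    (hV : ContDiff ℝ 2 V) (hVint : Integrable V)
    (hV' : Filter.Tendsto (fun y => deriv V y) Filter.atBot (nhds 0))
    (hyV : Filter.Tendsto (fun y => y * V y) Filter.atBot (nhds 0)) :
    ∀ ξ : ℝ,
      μ * deriv (deriv (UV μ M V)) ξ
          + 1 / 2 * deriv (fun x => x * UV μ M V x) ξ
          - deriv (fun x => AM μ M x * UV μ M V x) ξ
        = deriv (fun x => Efun μ M x * (μ * deriv V x + 1 / 2 * x * V x)) ξ := by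
  intro ξ
  have hVc : Continuous V := hV.continuous
  have hV1 : Differentiable ℝ V := hV.differentiable (by norm_num)
  have hVd2 : ContDiff ℝ 1 (deriv V) := by
    have h : ContDiff ℝ ((1 : ℕ) + 1) V := by exact_mod_cast hV
    exact (contDiff_succ_iff_deriv.mp h).2.2
  have hV2 : Differentiable ℝ (deriv V) := hVd2.differentiable one_ne_zero
  have hUVP : UV μ M V = PP μ M V := funext fun x => UV_eq hμ M hVint hVc x
  have hPQ : ∀ x, HasDerivAt (PP μ M V) (QQ μ M V x) x := fun x =>
    PP_hasDeriv hμ hVint hVc x (hV1 x).hasDerivAt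
  have hderivUV : deriv (UV μ M V) = QQ μ M V := by
    rw [hUVP]; funext x; exact (hPQ x).deriv
  have hgdiff : ∀ x, DifferentiableAt ℝ (gg μ) x := fun x =>
    (gg_hasDeriv hμ x).differentiableAt
  have hWdiff : ∀ x, DifferentiableAt ℝ (WW V) x := fun x =>
    (WW_hasDeriv hVint hVc x).differentiableAt
  have hDdiff : ∀ x, DifferentiableAt ℝ (DD μ M) x := fun x =>
    (DD_hasDeriv hμ M x).differentiableAt
  have hDne : ∀ x : ℝ, DD μ M x ≠ 0 := fun x => (DD_pos hμ M x).ne'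
  have hPPdiff : ∀ x, DifferentiableAt ℝ (PP μ M V) x := fun x => (hPQ x).differentiableAt
  have hAMdiff : ∀ x, DifferentiableAt ℝ (AM μ M) x := by
    intro x
    have h : AM μ M = fun t => 2 * μ * cc μ M * gg μ t / DD μ M t := funext (AM_eq hμ M)
    rw [h]
    exact ((differentiableAt_const _).mul (hgdiff x)).div (hDdiff x) (hDne x)
  have hQQdiff : DifferentiableAt ℝ (QQ μ M V) ξ := by
    unfold QQ
    apply DifferentiableAt.add
    · exact ((((((differentiableAt_const _).mul (hgdiff ξ)).mul
        ((hV1 ξ).sub ((differentiableAt_fun_id.div_const _).mul (hWdiff ξ)))).mul (hDdiff ξ)).add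
        (((differentiableAt_const _).mul ((hgdiff ξ).pow 2)).mul (hWdiff ξ))).div
        ((hDdiff ξ).pow 3) (pow_ne_zero 3 (hDne ξ)))
    · exact (((hV2 ξ).mul (hDdiff ξ)).add
        (((differentiableAt_const _).mul (hgdiff ξ)).mul (hV1 ξ))).div
        ((hDdiff ξ).pow 2) (pow_ne_zero 2 (hDne ξ))
  rw [hderivUV]
  simp only [hUVP]
  have d1 : DifferentiableAt ℝ (fun x => μ * QQ μ M V x) ξ := hQQdiff.const_mul μ
  have d2 : DifferentiableAt ℝ (fun x => x * PP μ M V x) ξ :=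
    differentiableAt_fun_id.mul (hPPdiff ξ)
  have d2' : DifferentiableAt ℝ (fun x => 1 / 2 * (x * PP μ M V x)) ξ := d2.const_mul _
  have d3 : DifferentiableAt ℝ (fun x => AM μ M x * PP μ M V x) ξ :=
    (hAMdiff ξ).mul (hPPdiff ξ)
  have hsplit : deriv
      (fun x => μ * QQ μ M V x + 1 / 2 * (x * PP μ M V x) - AM μ M x * PP μ M V x) ξ
      = μ * deriv (QQ μ M V) ξ + 1 / 2 * deriv (fun x => x * PP μ M V x) ξ
        - deriv (fun x => AM μ M x * PP μ M V x) ξ := by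
    rw [deriv_fun_sub (d1.fun_add d2') d3, deriv_fun_add d1 d2', deriv_const_mul μ hQQdiff,
      deriv_const_mul _ d2]
  rw [← hsplit]
  have hkey : (fun x => μ * QQ μ M V x + 1 / 2 * (x * PP μ M V x) - AM μ M x * PP μ M V x)
      = fun x => Efun μ M x * (μ * deriv V x + 1 / 2 * x * V x) :=
    funext fun x => key_identity hμ V x
  rw [hkey]
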